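/- arXiv:1401.7568 — 2 statements merged into one kernel-verified Lean document; each statement's English description precedes it below -/
import Mathlib

section
/- Let η be a Poisson process with σ-finite intensity measure λ, and let P_s, s ∈ [0,1], be the thinning–superposition operator defined for F ∈ L¹_η with representative f by P_s F = ∫ E[ f(η^{(s)} + μ) | η ] Π_{(1−s)λ}(dμ), where η^{(s)} is an independent s-thinning of η and Π_{(1−s)λ} is the law of a Poisson process with intensity (1−s)λ. Then for every p ≥ 1 and every F ∈ L¹_η with |F|^p integrable, E[|P_s F|^p] ≤ E[|F|^p]. -/
open MeasureTheory ProbabilityTheory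

/-- The thinning–superposition operator `P_s`: for a representative `f` of a Poisson functional,
`(Pthin T Pi0 f)(μ) = ∫∫ f(κ + ν) Pi0(dν) T(μ, dκ)`, where `T` is the conditional law of the
`s`-thinning `η^{(s)}` given `η = μ` and `Pi0 = Π_{(1−s)λ}` is the law of an independent Poisson
process with intensity `(1−s)λ`.  Thus `P_s F = (Pthin T Pi0 f)(η) = ∫ E[f(η^{(s)}+ν) | η] Pi0(dν)`. -/
noncomputable def Pthin {X : Type*} [MeasurableSpace X]
    (T : Kernel (Measure X) (Measure X)) (Pi0 : Measure (Measure X))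
    (f : Measure X → ℝ) (μ : Measure X) : ℝ :=
  ∫ κ, ∫ ν, f (κ + ν) ∂Pi0 ∂(T μ)

/-- Jensen's inequality for `t ↦ |t|^p`, `p ≥ 1`, over a probability measure, stated with
`lintegral` on the right so that no integrability hypothesis is needed. -/
lemma jensen_abs_rpow {Y : Type*} [MeasurableSpace Y] (Q : Measure Y) [IsProbabilityMeasure Q]
    {g : Y → ℝ} (hg : AEMeasurable g Q) {p : ℝ} (hp : 1 ≤ p) :
    ENNReal.ofReal (|∫ y, g y ∂Q| ^ p) ≤ ∫⁻ y, ENNReal.ofReal (|g y| ^ p) ∂Q := by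
  have hp0 : 0 < p := lt_of_lt_of_le one_pos hp
  have h1 : |∫ y, g y ∂Q| ≤ ∫ y, |g y| ∂Q := by
    simpa [Real.norm_eq_abs] using norm_integral_le_integral_norm (μ := Q) g
  have h2 : ENNReal.ofReal (|∫ y, g y ∂Q| ^ p) ≤ ENNReal.ofReal ((∫ y, |g y| ∂Q) ^ p) :=
    ENNReal.ofReal_le_ofReal (Real.rpow_le_rpow (abs_nonneg _) h1 hp0.le)
  refine h2.trans ?_
  by_cases hint : Integrable g Q
  · have habs : Integrable (fun y => |g y|) Q := hint.abs
    have hnn : 0 ≤ᵐ[Q] fun y => |g y| := Filter.Eventually.of_forall fun _ => abs_nonneg _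
    have heq : ENNReal.ofReal (∫ y, |g y| ∂Q) = ∫⁻ y, ENNReal.ofReal (|g y|) ∂Q :=
      ofReal_integral_eq_lintegral_ofReal habs hnn
    have hmeas : AEMeasurable (fun y => ENNReal.ofReal (|g y|)) Q :=
      (measurable_abs.comp_aemeasurable hg).ennreal_ofReal
    have key : (∫⁻ y, ENNReal.ofReal (|g y|) ∂Q) ^ p
        ≤ ∫⁻ y, (ENNReal.ofReal (|g y|)) ^ p ∂Q := by
      rcases eq_or_lt_of_le hp with hpe | hplt
      · simp [← hpe]
      · have hpq : p.HolderConjugate (p / (p - 1)) := Real.HolderConjugate.conjExponent hplt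
        have h := ENNReal.lintegral_mul_le_Lp_mul_Lq Q hpq hmeas
          (aemeasurable_const (b := (1 : ENNReal)))
        simp only [Pi.mul_apply, mul_one, ENNReal.one_rpow, lintegral_const, measure_univ,
          one_mul, ENNReal.one_rpow] at h
        calc (∫⁻ y, ENNReal.ofReal (|g y|) ∂Q) ^ p
            ≤ ((∫⁻ y, (ENNReal.ofReal (|g y|)) ^ p ∂Q) ^ (1 / p)) ^ p :=
              ENNReal.rpow_le_rpow h hp0.le
          _ = ∫⁻ y, (ENNReal.ofReal (|g y|)) ^ p ∂Q := by
              rw [one_div, ENNReal.rpow_inv_rpow hp0.ne']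
    calc ENNReal.ofReal ((∫ y, |g y| ∂Q) ^ p)
        = (ENNReal.ofReal (∫ y, |g y| ∂Q)) ^ p :=
          (ENNReal.ofReal_rpow_of_nonneg (integral_nonneg fun _ => abs_nonneg _) hp0.le).symm
      _ = (∫⁻ y, ENNReal.ofReal (|g y|) ∂Q) ^ p := by rw [heq]
      _ ≤ ∫⁻ y, (ENNReal.ofReal (|g y|)) ^ p ∂Q := key
      _ = ∫⁻ y, ENNReal.ofReal (|g y| ^ p) ∂Q := by
          refine lintegral_congr fun y => ?_
          exact ENNReal.ofReal_rpow_of_nonneg (abs_nonneg _) hp0.le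
  · have : ¬ Integrable (fun y => |g y|) Q := by
      intro h
      exact hint ((integrable_norm_iff hg.aestronglyMeasurable).mp (by simpa [Real.norm_eq_abs]))
    rw [integral_undef this]
    simp [Real.zero_rpow hp0.ne']

/-- Contractivity of the thinning operator `P_s` on `L^p`, `p ≥ 1`:
`E[|P_s F|^p] ≤ E[|F|^p]` for `F = f(η)`.  The hypothesis `hmix` is the mixing identity
`Pi0_λ = E ∫ 1{η^{(s)} + ν ∈ ·} Π_{(1−s)λ}(dν)`: superposing the `s`-thinning of `η` with an
independent Poisson process of intensity `(1−s)λ` reproduces the law of `η`. -/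
theorem lintegral_abs_Pthin_rpow_le {X Ω : Type*} [MeasurableSpace X] [MeasurableSpace Ω]
    (P : Measure Ω) [IsProbabilityMeasure P]
    (η : Ω → Measure X) (hη : Measurable η)
    (T : Kernel (Measure X) (Measure X)) [IsMarkovKernel T]
    (Pi0 : Measure (Measure X)) [IsProbabilityMeasure Pi0]
    (hmix : (P.map η).bind
        (fun μ => ((T μ).prod Pi0).map (fun q : Measure X × Measure X => q.1 + q.2))
      = P.map η)
    (f : Measure X → ℝ) (hf : Measurable f)
    (p : ℝ) (hp : 1 ≤ p) :
    ∫⁻ ω, ENNReal.ofReal (|Pthin T Pi0 f (η ω)| ^ p) ∂P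
      ≤ ∫⁻ ω, ENNReal.ofReal (|f (η ω)| ^ p) ∂P := by
  have hp0 : 0 < p := lt_of_lt_of_le one_pos hp
  -- measurability of the addition and compositions
  have hadd : Measurable (fun q : Measure X × Measure X => q.1 + q.2) :=
    measurable_add
  have hfadd : Measurable (fun q : Measure X × Measure X => f (q.1 + q.2)) := hf.comp hadd
  have hφ : Measurable (fun μ => ENNReal.ofReal (|f μ| ^ p)) :=
    (hf.abs.pow_const p).ennreal_ofReal
  -- inner function `κ ↦ ∫ ν, f (κ + ν) ∂Pi0` is measurable
  have hginner : Measurable (fun κ => ∫ ν, f (κ + ν) ∂Pi0) :=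
    (hfadd.stronglyMeasurable.integral_prod_right').measurable
  -- pointwise double Jensen
  have hpoint : ∀ μ : Measure X,
      ENNReal.ofReal (|Pthin T Pi0 f μ| ^ p)
        ≤ ∫⁻ κ, ∫⁻ ν, ENNReal.ofReal (|f (κ + ν)| ^ p) ∂Pi0 ∂(T μ) := by
    intro μ
    have h1 := jensen_abs_rpow (T μ) (g := fun κ => ∫ ν, f (κ + ν) ∂Pi0)
      hginner.aemeasurable hp
    refine h1.trans (lintegral_mono fun κ => ?_)
    exact jensen_abs_rpow Pi0 (g := fun ν => f (κ + ν))
      (hf.comp (measurable_const.add measurable_id)).aemeasurable hp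
  calc ∫⁻ ω, ENNReal.ofReal (|Pthin T Pi0 f (η ω)| ^ p) ∂P
      ≤ ∫⁻ ω, ∫⁻ κ, ∫⁻ ν, ENNReal.ofReal (|f (κ + ν)| ^ p) ∂Pi0 ∂(T (η ω)) ∂P :=
        lintegral_mono fun ω => hpoint (η ω)
    _ = ∫⁻ μ, ∫⁻ κ, ∫⁻ ν, ENNReal.ofReal (|f (κ + ν)| ^ p) ∂Pi0 ∂(T μ) ∂(P.map η) := by
        rw [lintegral_map _ hη]
        have hinner : Measurable (fun q : (Measure X × Measure X) × Measure X =>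
            ENNReal.ofReal (|f (q.1.2 + q.2)| ^ p)) :=
          hφ.comp ((measurable_snd.comp measurable_fst).add measurable_snd)
        exact Measurable.lintegral_kernel_prod_right' (κ := T) hinner.lintegral_prod_right'
    _ = ∫⁻ μ, ∫⁻ κν, ENNReal.ofReal (|f (κν.1 + κν.2)| ^ p) ∂((T μ).prod Pi0) ∂(P.map η) := by
        refine lintegral_congr fun μ => ?_
        exact (lintegral_prod _ ((hφ.comp hadd).aemeasurable)).symm
    _ = ∫⁻ μ, ∫⁻ ξ, ENNReal.ofReal (|f ξ| ^ p)
          ∂(((T μ).prod Pi0).map (fun q : Measure X × Measure X => q.1 + q.2)) ∂(P.map η) := by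
        refine lintegral_congr fun μ => ?_
        rw [lintegral_map hφ hadd]
    _ = ∫⁻ ξ, ENNReal.ofReal (|f ξ| ^ p) ∂((P.map η).bind
          (fun μ => ((T μ).prod Pi0).map (fun q : Measure X × Measure X => q.1 + q.2))) := by
        refine (Measure.lintegral_bind ?_ hφ.aemeasurable).symm
        have : (fun μ => ((T μ).prod Pi0).map (fun q : Measure X × Measure X => q.1 + q.2))
            = fun μ => (Kernel.map (T ×ₖ Kernel.const (Measure X) Pi0)
                (fun q : Measure X × Measure X => q.1 + q.2)) μ := by
          funext μ
          rw [Kernel.map_apply _ hadd, Kernel.prod_apply, Kernel.const_apply]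
        rw [this]
        exact (Kernel.measurable _).aemeasurable
    _ = ∫⁻ ξ, ENNReal.ofReal (|f ξ| ^ p) ∂(P.map η) := by rw [hmix]
    _ = ∫⁻ ω, ENNReal.ofReal (|f (η ω)| ^ p) ∂P := lintegral_map hφ hη
end

section
/- In the d-dimensional k-nearest neighbour graph setting, let η_t be a Poisson process of intensity t on a compact convex window H ⊂ ℝ^d with interior points, and suppose that for all x, y ∈ H the probability that x and y are connected by an edge (i.e., y is among the k nearest neighbours of x in η_t + δ_y, or x among the k nearest of y in η_t + δ_x) satisfies P(edge between x,y) ≤ C̃ exp(−t c̃ ‖x−y‖^d) for some constants C̃, c̃ > 0. Then the length M₁(x, η_t) of the longest edge created by adding the point x to η_t has exponentially decaying tail: P(M₁(x,η_t) ≥ s) ≤ C̃₁ exp(−t c̃₁ s^d) for all s ≥ 0, x ∈ H, t ≥ 1, for suitable constants C̃₁, c̃₁ > 0. -/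
open MeasureTheory ProbabilityTheory Metric
open scoped ENNReal

/-- `η` is a Poisson process on `X` with intensity measure `lam` under `P`: `η` is measurable,
`η(A)` is Poisson distributed with mean `lam A` for every measurable `A` of finite intensity, and
the counts over pairwise disjoint measurable sets are independent. -/
def IsPoissonProcess {Ω X : Type*} [MeasurableSpace Ω] [MeasurableSpace X]
    (P : MeasureTheory.Measure Ω) (η : Ω → MeasureTheory.Measure X)
    (lam : MeasureTheory.Measure X) : Prop :=
  Measurable η ∧
  (∀ A : Set X, MeasurableSet A → lam A ≠ ⊤ → ∀ n : ℕ,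
    P {ω | η ω A = n}
      = ENNReal.ofReal (Real.exp (-(lam A).toReal) * (lam A).toReal ^ n / n.factorial)) ∧
  (∀ {ι : Type} (A : ι → Set X), (∀ i, MeasurableSet (A i)) →
    Pairwise (Function.onFun Disjoint A) →
    ProbabilityTheory.iIndepFun (fun i ω => η ω (A i)) P)

/-- `y` is among the `k` nearest neighbours of `x` in the configuration `μ`: fewer than `k`
points of `μ` are strictly closer to `x` than `y` is. -/
def IsKNearest {E : Type*} [MeasurableSpace E] [PseudoMetricSpace E]
    (k : ℕ) (x y : E) (μ : Measure E) : Prop :=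
  μ {z | dist x z < dist x y} < (k : ℝ≥0∞)

/-- `x` and `y` are joined by an edge of the `k`-nearest neighbour graph over the
configuration `μ`: `y` is among the `k` nearest neighbours of `x` in `μ + δ_y`, or `x` is among
the `k` nearest neighbours of `y` in `μ + δ_x`. -/
def KNNEdge {E : Type*} [MeasurableSpace E] [PseudoMetricSpace E]
    (k : ℕ) (x y : E) (μ : Measure E) : Prop :=
  IsKNearest k x y (μ + Measure.dirac y) ∨ IsKNearest k y x (μ + Measure.dirac x)

set_option linter.unusedSectionVars false
set_option linter.unusedVariables false
set_option maxHeartbeats 2000000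

section PoissonAux

variable {Ω X : Type*} [MeasurableSpace Ω] [MeasurableSpace X]
    {P : Measure Ω} [IsProbabilityMeasure P] {η : Ω → Measure X} {lam : Measure X}

lemma meas_count (hP : IsPoissonProcess P η lam) {A : Set X} (hA : MeasurableSet A) :
    Measurable (fun ω => η ω A) := (Measure.measurable_coe hA).comp hP.1

lemma poisson_eq_zero (hP : IsPoissonProcess P η lam) {A : Set X} (hA : MeasurableSet A)
    (hfin : lam A ≠ ⊤) :
    P {ω | η ω A = 0} = ENNReal.ofReal (Real.exp (-(lam A).toReal)) := by
  have h := hP.2.1 A hA hfin 0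
  simpa using h

lemma poisson_ne_zero_le (hP : IsPoissonProcess P η lam) {A : Set X} (hA : MeasurableSet A)
    (hfin : lam A ≠ ⊤) :
    P {ω | η ω A ≠ 0} ≤ ENNReal.ofReal (lam A).toReal := by
  have hms : MeasurableSet {ω | η ω A = 0} := (meas_count hP hA) (measurableSet_singleton 0)
  have hc : P {ω | η ω A ≠ 0} = 1 - P {ω | η ω A = 0} := by
    have : {ω | η ω A ≠ 0} = {ω | η ω A = 0}ᶜ := rfl
    rw [this, measure_compl hms (measure_ne_top P _), measure_univ]
  rw [hc, poisson_eq_zero hP hA hfin]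
  rw [tsub_le_iff_right, ← ENNReal.ofReal_add (ENNReal.toReal_nonneg) (Real.exp_pos _).le,
    ← ENNReal.ofReal_one]
  apply ENNReal.ofReal_le_ofReal
  nlinarith [Real.add_one_le_exp (-(lam A).toReal)]

lemma poisson_lt_le (hP : IsPoissonProcess P η lam) {A : Set X} (hA : MeasurableSet A)
    (hfin : lam A ≠ ⊤) (k : ℕ) :
    P {ω | η ω A < k} ≤ ENNReal.ofReal (2 ^ k * Real.exp (-((lam A).toReal / 2))) := by
  set l : ℝ := (lam A).toReal with hl
  have hl0 : 0 ≤ l := ENNReal.toReal_nonneg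
  set S : ℕ → Set Ω := fun n => {ω | η ω A = n} with hS
  have hSm : ∀ n, MeasurableSet (S n) := fun n =>
    (meas_count hP hA) (measurableSet_singleton _)
  have hSd : Pairwise (Function.onFun Disjoint S) := by
    intro m n hmn
    simp only [Function.onFun, hS]
    apply Set.disjoint_left.2
    intro ω hm hn
    exact hmn (Nat.cast_injective (hm.symm.trans hn : (m : ℝ≥0∞) = n))
  have hPU : P (⋃ n, S n) = 1 := by
    rw [measure_iUnion hSd hSm]
    have : ∀ n, P (S n) = ENNReal.ofReal (Real.exp (-l)) * ENNReal.ofReal (l ^ n / n.factorial) := by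
      intro n
      rw [hP.2.1 A hA hfin n, mul_div_assoc, ENNReal.ofReal_mul (Real.exp_pos _).le]
    simp_rw [this, ENNReal.tsum_mul_left]
    rw [← ENNReal.ofReal_tsum_of_nonneg (fun n => by positivity)
      (Real.summable_pow_div_factorial l)]
    have hexp : ∑' (n : ℕ), l ^ n / (n.factorial : ℝ) = Real.exp l := by
      rw [Real.exp_eq_exp_ℝ, NormedSpace.exp_eq_tsum_div]
    rw [hexp, ← ENNReal.ofReal_mul (Real.exp_pos _).le, ← Real.exp_add, neg_add_cancel,
      Real.exp_zero, ENNReal.ofReal_one]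
  have hsub : {ω | η ω A < k} ⊆ (⋃ n ∈ Finset.range k, S n) ∪ (⋃ n, S n)ᶜ := by
    intro ω hω
    by_cases hU : ω ∈ ⋃ n, S n
    · left
      rcases Set.mem_iUnion.1 hU with ⟨n, hn⟩
      refine Set.mem_biUnion (Finset.mem_range.2 ?_) hn
      have : (n : ℝ≥0∞) < k := by rw [← hn]; exact hω
      exact_mod_cast this
    · right; exact hU
  calc P {ω | η ω A < k} ≤ P (⋃ n ∈ Finset.range k, S n) + P ((⋃ n, S n)ᶜ) :=
        le_trans (measure_mono hsub) (measure_union_le _ _)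
    _ = P (⋃ n ∈ Finset.range k, S n) := by
        rw [measure_compl (MeasurableSet.iUnion hSm) (measure_ne_top P _), hPU, measure_univ,
          tsub_self, add_zero]
    _ ≤ ∑ n ∈ Finset.range k, P (S n) := measure_biUnion_finset_le _ _
    _ ≤ ∑ n ∈ Finset.range k, ENNReal.ofReal (2 ^ n * Real.exp (-(l / 2))) := by
        apply Finset.sum_le_sum
        intro n _
        rw [hP.2.1 A hA hfin n]
        apply ENNReal.ofReal_le_ofReal
        have hterm : (l / 2) ^ n / (n.factorial : ℝ) ≤ Real.exp (l / 2) := by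
          rw [Real.exp_eq_exp_ℝ, NormedSpace.exp_eq_tsum_div]
          exact Summable.le_tsum (Real.summable_pow_div_factorial _) n (fun m _ => by positivity)
        have h1 : l ^ n / (n.factorial : ℝ) ≤ 2 ^ n * Real.exp (l / 2) := by
          have : l ^ n = 2 ^ n * (l / 2) ^ n := by rw [← mul_pow]; ring_nf
          rw [this, mul_div_assoc]
          exact mul_le_mul_of_nonneg_left hterm (by positivity)
        calc Real.exp (-l) * l ^ n / n.factorial = Real.exp (-l) * (l ^ n / n.factorial) := by ring
          _ ≤ Real.exp (-l) * (2 ^ n * Real.exp (l / 2)) :=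
              mul_le_mul_of_nonneg_left h1 (Real.exp_pos _).le
          _ = 2 ^ n * Real.exp (-(l / 2)) := by
              rw [show -(l / 2) = -l + l / 2 by ring, Real.exp_add]; ring
    _ ≤ ENNReal.ofReal (2 ^ k * Real.exp (-(l / 2))) := by
        rw [← ENNReal.ofReal_sum_of_nonneg (fun n _ => by positivity)]
        apply ENNReal.ofReal_le_ofReal
        rw [← Finset.sum_mul]
        apply mul_le_mul_of_nonneg_right _ (Real.exp_pos _).le
        rw [geom_sum_eq (by norm_num : (2:ℝ) ≠ 1) k]
        norm_num

lemma poisson_indep_prod (hP : IsPoissonProcess P η lam) {A B : Set X}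
    (hA : MeasurableSet A) (hB : MeasurableSet B) (hdisj : Disjoint A B) (k : ℕ) :
    P ({ω | η ω A ≠ 0} ∩ {ω | η ω B < k})
      = P {ω | η ω A ≠ 0} * P {ω | η ω B < k} := by
  set C : Bool → Set X := fun b => if b then A else B with hC
  have hCm : ∀ b, MeasurableSet (C b) := by
    intro b; cases b
    · simpa [hC] using hB
    · simpa [hC] using hA
  have hCd : Pairwise (Function.onFun Disjoint C) := by
    intro i j hij
    cases i <;> cases j <;> simp_all [Function.onFun, hC]
    · exact hdisj.symm
  have hind := (hP.2.2 C hCm hCd).indepFun (show (true : Bool) ≠ false by simp)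
  have h := hind.measure_inter_preimage_eq_mul ({0}ᶜ : Set ℝ≥0∞) (Set.Iio (k : ℝ≥0∞))
    (measurableSet_singleton 0).compl measurableSet_Iio
  simpa [hC, Set.preimage, Set.mem_Iio] using h

end PoissonAux

section GeomAux

variable {d : ℕ}

lemma convex_inter_ball_vol {H : Set (EuclideanSpace ℝ (Fin d))}
    (hconv : Convex ℝ H) {p : EuclideanSpace ℝ (Fin d)} {ρ : ℝ} (hρ : 0 < ρ)
    (hball : ball p ρ ⊆ H) {z : EuclideanSpace ℝ (Fin d)} (hz : z ∈ H)
    {r D : ℝ} (hr : 0 < r) (hDp : dist p z ≤ D) (hD : 0 ≤ D) (hrD : r ≤ ρ + D + 1) :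
    ENNReal.ofReal ((r / (ρ + D + 1)) ^ d * ρ ^ d) * volume (ball (0 : EuclideanSpace ℝ (Fin d)) 1)
      ≤ volume (H ∩ ball z r) := by
  have hden : 0 < ρ + D + 1 := by linarith
  set θ : ℝ := r / (ρ + D + 1) with hθdef
  have hθ0 : 0 < θ := div_pos hr hden
  have hθ1 : θ ≤ 1 := (div_le_one hden).2 hrD
  set c : EuclideanSpace ℝ (Fin d) := z + θ • (p - z) with hc
  have hsub : ball c (θ * ρ) ⊆ H ∩ ball z r := by
    intro w hw
    rw [mem_ball, dist_eq_norm] at hw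
    set u : EuclideanSpace ℝ (Fin d) := p + θ⁻¹ • (w - c) with hu
    have hup : ‖u - p‖ < ρ := by
      have : u - p = θ⁻¹ • (w - c) := by rw [hu]; abel
      rw [this, norm_smul, norm_inv, Real.norm_of_nonneg hθ0.le]
      rw [inv_mul_lt_iff₀ hθ0]
      exact hw
    have huH : u ∈ H := hball (by rwa [mem_ball, dist_eq_norm])
    have hwrep : w = (1 - θ) • z + θ • u := by
      rw [hu, hc]
      rw [smul_add, smul_smul, mul_inv_cancel₀ hθ0.ne', one_smul]
      module
    constructor
    · rw [hwrep]
      exact hconv hz huH (by linarith) hθ0.le (by ring)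
    · rw [mem_ball, dist_eq_norm]
      have hwz : w - z = θ • (u - z) := by rw [hwrep]; module
      rw [hwz, norm_smul, Real.norm_of_nonneg hθ0.le]
      have hnorm : ‖u - z‖ ≤ ρ + D := by
        calc ‖u - z‖ ≤ ‖u - p‖ + ‖p - z‖ := norm_sub_le_norm_sub_add_norm_sub u p z
          _ ≤ ρ + D := by
              rw [← dist_eq_norm]
              exact add_le_add hup.le hDp
      calc θ * ‖u - z‖ ≤ θ * (ρ + D) := by nlinarith
        _ < θ * (ρ + D + 1) := by nlinarith
        _ = r := by rw [hθdef]; field_simp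
  calc ENNReal.ofReal (θ ^ d * ρ ^ d) * volume (ball (0 : EuclideanSpace ℝ (Fin d)) 1)
      = volume (ball c (θ * ρ)) := by
        rw [Measure.addHaar_ball_of_pos _ c (mul_pos hθ0 hρ), finrank_euclideanSpace_fin,
          mul_pow]
    _ ≤ volume (H ∩ ball z r) := measure_mono hsub

def gcube (ε : ℝ) (v : Fin d → ℤ) : Set (EuclideanSpace ℝ (Fin d)) :=
  {u | ∀ j, ε * v j ≤ u j ∧ u j < ε * v j + ε}

lemma gcube_eq (ε : ℝ) (v : Fin d → ℤ) :
    gcube ε v = (MeasurableEquiv.toLp 2 (Fin d → ℝ)).symm ⁻¹'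
      (Set.univ.pi fun j => Set.Ico (ε * v j) (ε * v j + ε)) := by
  ext u
  simp [gcube, Set.mem_pi]

lemma gcube_measurable (ε : ℝ) (v : Fin d → ℤ) : MeasurableSet (gcube ε v) := by
  rw [gcube_eq]
  exact (MeasurableEquiv.toLp 2 (Fin d → ℝ)).symm.measurable
    (MeasurableSet.univ_pi fun j => measurableSet_Ico)

lemma gcube_volume {ε : ℝ} (hε : 0 ≤ ε) (v : Fin d → ℤ) :
    volume (gcube ε v) = ENNReal.ofReal (ε ^ d) := by
  rw [gcube_eq, (EuclideanSpace.volume_preserving_symm_measurableEquiv_toLp (Fin d)).measure_preimage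
    ((MeasurableSet.univ_pi fun j => measurableSet_Ico).nullMeasurableSet)]
  rw [volume_pi_pi]
  simp [Real.volume_Ico, ← ENNReal.ofReal_pow hε]

lemma gcube_mem {ε : ℝ} (hε : 0 < ε) (y : EuclideanSpace ℝ (Fin d)) :
    y ∈ gcube ε (fun j => ⌊y j / ε⌋) := by
  intro j
  constructor
  · calc ε * ↑⌊y j / ε⌋ ≤ ε * (y j / ε) :=
        mul_le_mul_of_nonneg_left (Int.floor_le _) hε.le
      _ = y j := by field_simp
  · have h := Int.lt_floor_add_one (y j / ε)
    calc y j = ε * (y j / ε) := by field_simp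
      _ < ε * (↑⌊y j / ε⌋ + 1) := by exact mul_lt_mul_of_pos_left h hε
      _ = ε * ↑⌊y j / ε⌋ + ε := by ring

lemma gcube_disjoint {ε : ℝ} (hε : 0 < ε) :
    Pairwise (Function.onFun Disjoint (gcube (d := d) ε)) := by
  intro v w hvw
  rcases Function.ne_iff.1 hvw with ⟨j, hj⟩
  apply Set.disjoint_left.2
  intro u hu hu'
  rcases (hu j) with ⟨h1, h2⟩
  rcases (hu' j) with ⟨h3, h4⟩
  rcases lt_or_gt_of_ne hj with h | h
  · have : (v j : ℝ) + 1 ≤ (w j : ℝ) := by exact_mod_cast h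
    nlinarith
  · have : (w j : ℝ) + 1 ≤ (v j : ℝ) := by exact_mod_cast h
    nlinarith

lemma gcube_dist_le {ε : ℝ} (hε : 0 < ε) {v : Fin d → ℤ} {u w : EuclideanSpace ℝ (Fin d)}
    (hu : u ∈ gcube ε v) (hw : w ∈ gcube ε v) : dist u w ≤ ε * d := by
  rw [EuclideanSpace.dist_eq]
  simp_rw [Real.dist_eq, sq_abs]
  have hbound : ∀ j, (u j - w j) ^ 2 ≤ ε ^ 2 := by
    intro j
    rcases hu j with ⟨h1, h2⟩
    rcases hw j with ⟨h3, h4⟩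
    nlinarith
  calc Real.sqrt (∑ j, (u j - w j) ^ 2) ≤ Real.sqrt (∑ _j : Fin d, ε ^ 2) :=
      Real.sqrt_le_sqrt (Finset.sum_le_sum fun j _ => hbound j)
    _ = Real.sqrt (d * ε ^ 2) := by rw [Finset.sum_const, Finset.card_univ, Fintype.card_fin,
        nsmul_eq_mul]
    _ ≤ Real.sqrt ((ε * d) ^ 2) := by
        apply Real.sqrt_le_sqrt
        have h1 : (0:ℝ) ≤ d := Nat.cast_nonneg d
        have h2 : (d:ℝ) ≤ (d:ℝ) ^ 2 := by exact_mod_cast Nat.le_self_pow two_ne_zero d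
        nlinarith [sq_nonneg ε]
    _ = ε * d := Real.sqrt_sq (by positivity)

lemma gcube_coord_bound {ε : ℝ} (hε : 0 < ε) {v : Fin d → ℤ} {y : EuclideanSpace ℝ (Fin d)}
    (hy : y ∈ gcube ε v) (j : Fin d) : |y j - ε * v j| ≤ ε := by
  rcases hy j with ⟨h1, h2⟩
  rw [abs_le]; constructor <;> linarith

lemma coord_abs_le_dist (x y : EuclideanSpace ℝ (Fin d)) (j : Fin d) :
    |x j - y j| ≤ dist x y := by
  rw [EuclideanSpace.dist_eq, ← Real.sqrt_sq_eq_abs]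
  apply Real.sqrt_le_sqrt
  calc (x j - y j) ^ 2 = dist (x j) (y j) ^ 2 := by rw [Real.dist_eq, sq_abs]
    _ ≤ ∑ i, dist (x i) (y i) ^ 2 :=
        Finset.single_le_sum (f := fun i => dist (x i) (y i) ^ 2)
          (fun i _ => sq_nonneg _) (Finset.mem_univ j)

lemma gcube_index_finite {ε R : ℝ} (hε : 0 < ε) {H : Set (EuclideanSpace ℝ (Fin d))}
    {x : EuclideanSpace ℝ (Fin d)} (hH : H ⊆ closedBall x R) :
    {v : Fin d → ℤ | (gcube ε v ∩ H).Nonempty}.Finite := by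
  apply Set.Finite.subset (Set.Finite.pi (fun j : Fin d =>
    Set.finite_Icc (⌊(x j - R - ε) / ε⌋) (⌈(x j + R) / ε⌉)))
  intro v hv
  rcases hv with ⟨y, hyc, hyH⟩
  have hyd : dist y x ≤ R := mem_closedBall.1 (hH hyH)
  intro j _
  have h1 := gcube_coord_bound hε hyc j
  have h2 := coord_abs_le_dist y x j
  rw [abs_le] at h1 h2
  rcases hyc j with ⟨hc1, hc2⟩
  have hεv1 : y j - ε ≤ ε * v j := by linarith
  have hεv2 : ε * v j ≤ y j := hc1
  have hy1 : x j - R ≤ y j := by linarith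
  have hy2 : y j ≤ x j + R := by linarith
  constructor
  · have : (x j - R - ε) / ε ≤ (v j : ℝ) := by
      rw [div_le_iff₀ hε]
      nlinarith
    calc ⌊(x j - R - ε) / ε⌋ ≤ ⌊((v j : ℝ))⌋ := Int.floor_mono this
      _ = v j := Int.floor_intCast _
  · have : (v j : ℝ) ≤ (x j + R) / ε := by
      rw [le_div_iff₀ hε]
      nlinarith
    calc v j = ⌈((v j : ℝ))⌉ := (Int.ceil_intCast _).symm
      _ ≤ ⌈(x j + R) / ε⌉ := Int.ceil_mono this

lemma mul_exp_decay {b u : ℝ} (hb : 0 < b) (hu : 0 ≤ u) :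
    u * Real.exp (-(b * u)) ≤ (2 / b) * Real.exp (-(b / 2 * u)) := by
  have h1 : b / 2 * u ≤ Real.exp (b / 2 * u) := by
    nlinarith [Real.add_one_le_exp (b / 2 * u)]
  have h2 : u ≤ (2 / b) * Real.exp (b / 2 * u) := by
    rw [div_mul_eq_mul_div, le_div_iff₀ hb]
    nlinarith
  calc u * Real.exp (-(b * u))
      ≤ (2 / b) * Real.exp (b / 2 * u) * Real.exp (-(b * u)) :=
        mul_le_mul_of_nonneg_right h2 (Real.exp_pos _).le
    _ = (2 / b) * Real.exp (-(b / 2 * u)) := by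
        rw [mul_assoc, ← Real.exp_add]
        congr 2
        ring

lemma pow_lower {s x : ℝ} (hs : 0 ≤ s) (hx : 0 ≤ x) (e : ℕ) :
    s ^ (e + 1) + x * s ^ e ≤ (s + x) ^ (e + 1) := by
  calc s ^ (e + 1) + x * s ^ e = (s + x) * s ^ e := by ring
    _ ≤ (s + x) * (s + x) ^ e :=
        mul_le_mul_of_nonneg_left (pow_le_pow_left₀ hs (by linarith) e) (by linarith)
    _ = (s + x) ^ (e + 1) := by ring

end GeomAux

lemma knn_core {d k : ℕ} {Ω : Type*} [MeasurableSpace Ω] (P : Measure Ω)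
    [IsProbabilityMeasure P] (hd : 0 < d) (hk : 0 < k)
    (H : Set (EuclideanSpace ℝ (Fin d))) (hHm : MeasurableSet H) (hvolH : volume H ≠ ⊤)
    (D : ℝ) (hD0 : 0 ≤ D) (hdistD : ∀ a ∈ H, ∀ b ∈ H, dist a b ≤ D)
    (ωd : ℝ) (hωdpos : 0 < ωd)
    (hballvol : volume (ball (0 : EuclideanSpace ℝ (Fin d)) 1) = ENNReal.ofReal ωd)
    (cg γ b A c₁ C₂ : ℝ) (hcg0 : 0 < cg) (hγ0 : 0 < γ) (hγ1 : γ ≤ 1)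
    (hγ4d : γ * d ≤ 1 / 4) (hγcg : γ ^ d ≤ cg / 2 ^ (d + 1))
    (hbdef : b = cg / 2 ^ (d + 2)) (hAdef : A = 2 / (b * γ))
    (hc₁def : c₁ = b / 2) (hC₂def : C₂ = ωd * 2 ^ (d + k + 2) / b)
    (hgeom : ∀ z ∈ H, ∀ r : ℝ, 0 < r → r ≤ D + 1 →
      ENNReal.ofReal (cg * r ^ d) ≤ volume (ball z r ∩ H))
    (η : Ω → Measure (EuclideanSpace ℝ (Fin d))) (t : ℝ) (ht : 1 ≤ t)
    (hPt : IsPoissonProcess P η (ENNReal.ofReal t • volume.restrict H))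
    (x : EuclideanSpace ℝ (Fin d)) (hx : x ∈ H)
    (s : ℝ) (hs0 : 0 < s) (hsD : s ≤ D) (hreg : A < t * s ^ d) :
    P {ω | ∃ y, η ω {y} ≠ 0 ∧ s ≤ dist x y ∧
        (IsKNearest k x y (η ω + Measure.dirac x)
          ∨ IsKNearest k y x (η ω + Measure.dirac x))}
      ≤ ENNReal.ofReal ((2 ^ k + C₂) * Real.exp (-(t * c₁ * s ^ d))) := by
  classical
  have ht0 : 0 < t := lt_of_lt_of_le one_pos ht
  have hd0R : (0:ℝ) < d := by exact_mod_cast hd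
  have hb0 : 0 < b := by rw [hbdef]; positivity
  have hA0 : 0 < A := by rw [hAdef]; positivity
  have hc₁0 : 0 < c₁ := by rw [hc₁def]; positivity
  have hC₂0 : 0 < C₂ := by rw [hC₂def]; positivity
  have hballfin : volume (ball (0 : EuclideanSpace ℝ (Fin d)) 1) ≠ ⊤ := by
    rw [hballvol]; exact ENNReal.ofReal_ne_top
  have hωddef : ωd = (volume (ball (0 : EuclideanSpace ℝ (Fin d)) 1)).toReal := by
    rw [hballvol, ENNReal.toReal_ofReal hωdpos.le]
  set lam : Measure (EuclideanSpace ℝ (Fin d)) := ENNReal.ofReal t • volume.restrict H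
    with hlamdef
  have hfin : ∀ A' : Set (EuclideanSpace ℝ (Fin d)), lam A' ≠ ⊤ := by
    intro A'
    apply ne_top_of_le_ne_top _ (measure_mono (Set.subset_univ A'))
    rw [hlamdef, Measure.smul_apply, smul_eq_mul, Measure.restrict_apply_univ]
    exact ENNReal.mul_ne_top ENNReal.ofReal_ne_top hvolH
  have hlamval : ∀ A' : Set (EuclideanSpace ℝ (Fin d)), MeasurableSet A' →
      (lam A').toReal = t * (volume (A' ∩ H)).toReal := by
    intro A' hA'
    rw [hlamdef, Measure.smul_apply, Measure.restrict_apply hA', smul_eq_mul,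
      ENNReal.toReal_mul, ENNReal.toReal_ofReal ht0.le]
  have hPN : P {ω | η ω Hᶜ ≠ 0} = 0 := by
    have h := poisson_ne_zero_le hPt hHm.compl (hfin _)
    rw [hlamval _ hHm.compl, Set.compl_inter_self] at h
    simpa using h
  set ε : ℝ := γ * s with hεdef
  have hε0 : 0 < ε := mul_pos hγ0 hs0
  have hεd : ε * d ≤ s / 4 := by
    calc ε * d = (γ * d) * s := by ring
      _ ≤ (1/4) * s := mul_le_mul_of_nonneg_right hγ4d hs0.le
      _ = s / 4 := by ring
  have hεs : ε ≤ s := by nlinarith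
  have hHcb : H ⊆ closedBall x D := fun y hy => mem_closedBall.2 (hdistD y hy x hx)
  have hIfin := gcube_index_finite hε0 hHcb
  set It := hIfin.toFinset with hItdef
  set g : (Fin d → ℤ) → EuclideanSpace ℝ (Fin d) := fun v =>
    if h : (gcube ε v ∩ H).Nonempty then h.choose else x with hgdef
  have hgmem : ∀ v ∈ It, g v ∈ gcube ε v ∩ H := by
    intro v hv
    rw [hItdef, Set.Finite.mem_toFinset] at hv
    have hv' : (gcube ε v ∩ H).Nonempty := hv
    show (if h : (gcube ε v ∩ H).Nonempty then h.choose else x) ∈ gcube ε v ∩ H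
    rw [dif_pos hv']
    exact hv'.choose_spec
  set m : (Fin d → ℤ) → ℝ := fun v => max s (dist x (g v)) with hmdef
  set R : (Fin d → ℤ) → ℝ := fun v => max s (dist x (g v) - ε * d) - ε * d with hRdef
  have hdge1 : (1:ℝ) ≤ d := by exact_mod_cast hd
  have hεd0 : 0 ≤ ε * d := by positivity
  have hRs : ∀ v, s / 2 ≤ R v := by
    intro v
    have : s ≤ max s (dist x (g v) - ε * d) := le_max_left _ _
    rw [hRdef]
    simp only
    linarith
  have hR0 : ∀ v, 0 < R v := fun v => lt_of_lt_of_le (by linarith) (hRs v)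
  have hRD : ∀ v ∈ It, R v ≤ D + 1 := by
    intro v hv
    have hq : dist x (g v) ≤ D := hdistD x hx (g v) (hgmem v hv).2
    rw [hRdef]
    simp only
    have : max s (dist x (g v) - ε * d) ≤ D := max_le hsD (by linarith)
    linarith
  have hms : ∀ v, s ≤ m v := fun v => le_max_left _ _
  have hm0 : ∀ v, 0 < m v := fun v => lt_of_lt_of_le hs0 (hms v)
  have hRm : ∀ v, m v / 2 ≤ R v := by
    intro v
    have hm_eq : m v = s ⊔ dist x (g v) := rfl
    have hR_eq : R v = s ⊔ (dist x (g v) - ε * (d:ℝ)) - ε * (d:ℝ) := rfl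
    rw [hm_eq, hR_eq]
    rcases le_total (dist x (g v)) s with h | h
    · rw [max_eq_left h, max_eq_left (by linarith : dist x (g v) - ε * (d:ℝ) ≤ s)]
      linarith
    · rw [max_eq_right h]
      rcases le_total (dist x (g v) - ε * (d:ℝ)) s with h' | h'
      · rw [max_eq_left h']
        linarith [dist_nonneg (x := x) (y := g v)]
      · rw [max_eq_right h']
        linarith
  set E₀ : Set Ω := {ω | η ω (ball x s) < (k : ℝ≥0∞)} with hE₀def
  set Ev : (Fin d → ℤ) → Set Ω := fun v =>
    {ω | η ω (gcube ε v) ≠ 0} ∩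
      {ω | η ω (ball (g v) (R v) \ gcube ε v) < (k : ℝ≥0∞)} with hEvdef
  -- inclusion of the event in the union of manageable events
  have hincl : {ω | ∃ y, η ω {y} ≠ 0 ∧ s ≤ dist x y ∧
      (IsKNearest k x y (η ω + Measure.dirac x)
        ∨ IsKNearest k y x (η ω + Measure.dirac x))}
      ⊆ ({ω | η ω Hᶜ ≠ 0} ∪ E₀) ∪ ⋃ v ∈ It, Ev v := by
    rintro ω ⟨y, hy0, hys, hcase⟩
    by_cases hyH : y ∈ H
    swap
    · left; left
      simp only [Set.mem_setOf_eq]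
      intro h0
      have : η ω {y} ≤ η ω Hᶜ := measure_mono (Set.singleton_subset_iff.2 hyH)
      exact hy0 (le_antisymm (h0 ▸ this) zero_le)
    have hdxy0 : 0 < dist x y := lt_of_lt_of_le hs0 hys
    rcases hcase with h1 | h2
    · left; right
      rw [hE₀def]
      simp only [Set.mem_setOf_eq]
      rw [IsKNearest] at h1
      have hset : {z : EuclideanSpace ℝ (Fin d) | dist x z < dist x y} = ball x (dist x y) := by
        ext z; simp [mem_ball, dist_comm]
      rw [hset, Measure.add_apply] at h1
      have hd1 : Measure.dirac x (ball x (dist x y)) = 1 := by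
        rw [Measure.dirac_apply' _ measurableSet_ball]
        simp [mem_ball, hdxy0]
      calc η ω (ball x s) ≤ η ω (ball x (dist x y)) :=
            measure_mono (ball_subset_ball hys)
        _ ≤ η ω (ball x (dist x y)) + Measure.dirac x (ball x (dist x y)) := le_self_add
        _ < k := h1
    · right
      set v : Fin d → ℤ := fun j => ⌊y j / ε⌋ with hvdef
      have hyv : y ∈ gcube ε v := gcube_mem hε0 y
      have hvI : v ∈ It := by
        rw [hItdef, Set.Finite.mem_toFinset]
        exact ⟨y, hyv, hyH⟩
      refine Set.mem_biUnion hvI ⟨?_, ?_⟩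
      · simp only [Set.mem_setOf_eq]
        intro h0
        have : η ω {y} ≤ η ω (gcube ε v) :=
          measure_mono (Set.singleton_subset_iff.2 hyv)
        exact hy0 (le_antisymm (h0 ▸ this) zero_le)
      · simp only [Set.mem_setOf_eq]
        rw [IsKNearest] at h2
        have hset2 : {z : EuclideanSpace ℝ (Fin d) | dist y z < dist y x}
            = ball y (dist x y) := by
          ext z; simp [mem_ball, dist_comm]
        rw [hset2, Measure.add_apply] at h2
        have hd2 : Measure.dirac x (ball y (dist x y)) = 0 := by
          rw [Measure.dirac_apply' _ measurableSet_ball]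
          apply Set.indicator_of_notMem
          simp [mem_ball, dist_comm]
        rw [hd2, add_zero] at h2
        have hgv := hgmem v hvI
        have hdyg : dist y (g v) ≤ ε * d := gcube_dist_le hε0 hyv hgv.1
        have hsub2 : ball (g v) (R v) \ gcube ε v ⊆ ball y (dist x y) := by
          intro w hw
          rcases hw with ⟨hw1, -⟩
          rw [mem_ball] at hw1 ⊢
          have h4 : dist w y ≤ dist w (g v) + dist (g v) y := dist_triangle _ _ _
          have hq : dist x (g v) ≤ dist x y + ε * d := by
            calc dist x (g v) ≤ dist x y + dist y (g v) := dist_triangle _ _ _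
              _ ≤ dist x y + ε * d := by linarith
          have h5 : R v + ε * d ≤ dist x y := by
            rw [hRdef]
            simp only
            have : max s (dist x (g v) - ε * d) ≤ dist x y :=
              max_le hys (by linarith)
            linarith
          have hgy : dist (g v) y ≤ ε * d := by rw [dist_comm]; exact hdyg
          linarith
        exact lt_of_le_of_lt (measure_mono hsub2) h2
  -- probability bound for the central ball event
  have hE₀bound : P E₀ ≤ ENNReal.ofReal (2 ^ k * Real.exp (-(t * b * s ^ d))) := by
    refine le_trans (poisson_lt_le hPt measurableSet_ball (hfin _) k) ?_
    apply ENNReal.ofReal_le_ofReal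
    apply mul_le_mul_of_nonneg_left _ (by positivity)
    apply Real.exp_le_exp.2
    rw [hlamval _ measurableSet_ball, neg_le_neg_iff]
    have hfin2 : volume (ball x s ∩ H) ≠ ⊤ :=
      ne_top_of_le_ne_top hvolH (measure_mono Set.inter_subset_right)
    have hv : cg * s ^ d ≤ (volume (ball x s ∩ H)).toReal :=
      (ENNReal.ofReal_le_iff_le_toReal hfin2).1 (hgeom x hx s hs0 (by linarith))
    have hb2 : b * 2 ≤ cg := by
      rw [hbdef, div_mul_eq_mul_div, div_le_iff₀ (by positivity)]
      have h2d : (2:ℝ) ≤ 2 ^ (d + 2) := by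
        calc (2:ℝ) = 2 ^ 1 := (pow_one 2).symm
          _ ≤ 2 ^ (d + 2) := pow_le_pow_right₀ one_le_two (by omega)
      nlinarith [hcg0]
    have hsd : (0:ℝ) ≤ s ^ d := by positivity
    nlinarith [mul_le_mul_of_nonneg_left hv ht0.le, ht0.le]
  -- probability bound for each cube event
  have hEvbound : ∀ v ∈ It, P (Ev v)
      ≤ ENNReal.ofReal (t * ε ^ d * (2 ^ k * Real.exp (-(t * b * m v ^ d)))) := by
    intro v hv
    have hcubeMeas : MeasurableSet (gcube ε v) := gcube_measurable ε v
    have hdiffMeas : MeasurableSet (ball (g v) (R v) \ gcube ε v) :=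
      measurableSet_ball.diff hcubeMeas
    have hdisj : Disjoint (gcube ε v) (ball (g v) (R v) \ gcube ε v) :=
      disjoint_sdiff_self_right
    rw [hEvdef]
    simp only
    rw [poisson_indep_prod hPt hcubeMeas hdiffMeas hdisj k]
    have h1 : P {ω | η ω (gcube ε v) ≠ 0} ≤ ENNReal.ofReal (t * ε ^ d) := by
      refine le_trans (poisson_ne_zero_le hPt hcubeMeas (hfin _))
        (ENNReal.ofReal_le_ofReal ?_)
      rw [hlamval _ hcubeMeas]
      apply mul_le_mul_of_nonneg_left _ ht0.le
      have hle : volume (gcube ε v ∩ H) ≤ ENNReal.ofReal (ε ^ d) := by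
        rw [← gcube_volume hε0.le v]
        exact measure_mono Set.inter_subset_left
      exact ENNReal.toReal_le_of_le_ofReal (by positivity) hle
    have h2 : P {ω | η ω (ball (g v) (R v) \ gcube ε v) < (k : ℝ≥0∞)}
        ≤ ENNReal.ofReal (2 ^ k * Real.exp (-(t * b * m v ^ d))) := by
      refine le_trans (poisson_lt_le hPt hdiffMeas (hfin _) k)
        (ENNReal.ofReal_le_ofReal ?_)
      apply mul_le_mul_of_nonneg_left _ (by positivity)
      apply Real.exp_le_exp.2
      rw [hlamval _ hdiffMeas]
      have hginH : g v ∈ H := (hgmem v hv).2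
      have hVfin : volume ((ball (g v) (R v) \ gcube ε v) ∩ H) ≠ ⊤ :=
        ne_top_of_le_ne_top hvolH (measure_mono Set.inter_subset_right)
      set V : ℝ := (volume ((ball (g v) (R v) \ gcube ε v) ∩ H)).toReal with hVdef
      have hV0 : 0 ≤ V := ENNReal.toReal_nonneg
      have hsplit : volume (ball (g v) (R v) ∩ H)
          ≤ volume ((ball (g v) (R v) \ gcube ε v) ∩ H) + volume (gcube ε v) := by
        refine le_trans (measure_mono ?_) (measure_union_le _ _)
        intro w hw
        by_cases hwc : w ∈ gcube ε v
        · exact Or.inr hwc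
        · exact Or.inl ⟨⟨hw.1, hwc⟩, hw.2⟩
      have hgeo := hgeom (g v) hginH (R v) (hR0 v) (hRD v hv)
      have hcgR : cg * R v ^ d ≤ V + ε ^ d := by
        have hchain := le_trans hgeo hsplit
        rw [gcube_volume hε0.le v, ← ENNReal.ofReal_toReal hVfin, ← hVdef,
          ← ENNReal.ofReal_add hV0 (by positivity)] at hchain
        exact (ENNReal.ofReal_le_ofReal_iff (by positivity)).1 hchain
      have hεpow : ε ^ d ≤ cg * R v ^ d / 2 := by
        have he1 : ε ^ d = γ ^ d * s ^ d := by rw [hεdef, mul_pow]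
        have he2 : (s / 2) ^ d ≤ R v ^ d := pow_le_pow_left₀ (by linarith) (hRs v) d
        have he3 : s ^ d = 2 ^ d * (s / 2) ^ d := by
          rw [← mul_pow]
          ring_nf
        rw [he1, he3]
        calc γ ^ d * (2 ^ d * (s / 2) ^ d)
            ≤ (cg / 2 ^ (d + 1)) * (2 ^ d * (s / 2) ^ d) :=
              mul_le_mul_of_nonneg_right hγcg (by positivity)
          _ = cg * (s / 2) ^ d / 2 := by
              rw [pow_succ]
              field_simp
          _ ≤ cg * R v ^ d / 2 := by nlinarith [he2, hcg0]
      have hmR : (m v / 2) ^ d ≤ R v ^ d :=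
        pow_le_pow_left₀ (by positivity) (hRm v) d
      have hmpow : m v ^ d ≤ 2 ^ d * R v ^ d := by
        rw [div_pow] at hmR
        rw [div_le_iff₀ (by positivity : (0:ℝ) < 2 ^ d)] at hmR
        linarith [hmR]
      have hVlow : cg * R v ^ d / 2 ≤ V := by linarith
      have hbm : b * m v ^ d ≤ cg * R v ^ d / 4 := by
        have hb1 : b * m v ^ d ≤ b * (2 ^ d * R v ^ d) :=
          mul_le_mul_of_nonneg_left hmpow hb0.le
        calc b * m v ^ d ≤ b * (2 ^ d * R v ^ d) := hb1
          _ = cg * R v ^ d / 4 := by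
              rw [hbdef, pow_add]
              field_simp
              ring
      have hfinal : t * b * m v ^ d ≤ t * V / 2 := by
        have hbm2 : b * m v ^ d ≤ V / 2 := by nlinarith [hbm, hVlow]
        nlinarith [mul_le_mul_of_nonneg_left hbm2 ht0.le]
      linarith
    calc P {ω | η ω (gcube ε v) ≠ 0}
          * P {ω | η ω (ball (g v) (R v) \ gcube ε v) < (k : ℝ≥0∞)}
        ≤ ENNReal.ofReal (t * ε ^ d)
          * ENNReal.ofReal (2 ^ k * Real.exp (-(t * b * m v ^ d))) := mul_le_mul' h1 h2
      _ = ENNReal.ofReal (t * ε ^ d * (2 ^ k * Real.exp (-(t * b * m v ^ d)))) :=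
          (ENNReal.ofReal_mul (by positivity)).symm
  -- annulus index
  set jf : (Fin d → ℤ) → ℕ := fun v => ⌊(m v - s) / ε⌋₊ with hjfdef
  have hjle : ∀ v, s + jf v * ε ≤ m v := by
    intro v
    have h0 : 0 ≤ (m v - s) / ε := div_nonneg (by linarith [hms v]) hε0.le
    have h1 : (jf v : ℝ) ≤ (m v - s) / ε := Nat.floor_le h0
    have h2 : (jf v : ℝ) * ε ≤ m v - s := by
      rw [← le_div_iff₀ hε0]
      exact h1
    linarith
  have hjlt : ∀ v, m v < s + ((jf v : ℝ) + 1) * ε := by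
    intro v
    have h1 : (m v - s) / ε < (jf v : ℝ) + 1 := by
      exact_mod_cast Nat.lt_floor_add_one ((m v - s) / ε)
    have h2 : m v - s < ((jf v : ℝ) + 1) * ε := by
      rw [← div_lt_iff₀ hε0]
      exact h1
    linarith
  -- counting cubes in each annulus
  have hcard : ∀ j : ℕ, ((It.filter (fun v => jf v = j)).card : ℝ) * ε ^ d
      ≤ ωd * (2 ^ d * (s + j * ε) ^ d) := by
    intro j
    set T := It.filter (fun v => jf v = j) with hTdef
    have hrad0 : (0:ℝ) < s + ((j:ℝ) + 1) * ε + ε * d := by positivity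
    have hsubU : (⋃ v ∈ T, gcube ε v) ⊆ ball x (s + ((j:ℝ) + 1) * ε + ε * d) := by
      intro w hw
      rcases Set.mem_iUnion₂.1 hw with ⟨v, hvT, hwv⟩
      have hvT' := Finset.mem_filter.1 hvT
      have hgv := hgmem v hvT'.1
      have hdw : dist w (g v) ≤ ε * d := gcube_dist_le hε0 hwv hgv.1
      rw [mem_ball]
      have htri : dist w x ≤ dist w (g v) + dist (g v) x := dist_triangle _ _ _
      have hq : dist (g v) x ≤ m v := by
        rw [dist_comm]
        exact le_max_right _ _
      have hmv : m v < s + ((j:ℝ) + 1) * ε := by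
        have := hjlt v
        rw [hvT'.2] at this
        exact this
      linarith
    have hUvol : ∑ v ∈ T, volume (gcube ε v)
        ≤ volume (ball x (s + ((j:ℝ) + 1) * ε + ε * d)) := by
      rw [← measure_biUnion_finset
        (fun u hu w hw huw => gcube_disjoint hε0 huw)
        (fun v _ => gcube_measurable ε v)]
      exact measure_mono hsubU
    rw [Finset.sum_congr rfl (fun v _ => gcube_volume hε0.le v), Finset.sum_const,
      nsmul_eq_mul] at hUvol
    have hballvol : volume (ball x (s + ((j:ℝ) + 1) * ε + ε * d))
        = ENNReal.ofReal ((s + ((j:ℝ) + 1) * ε + ε * d) ^ d) * ENNReal.ofReal ωd := by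
      rw [Measure.addHaar_ball_of_pos _ x hrad0, finrank_euclideanSpace_fin, hωddef,
        ENNReal.ofReal_toReal hballfin]
    rw [hballvol, ← ENNReal.ofReal_natCast, ← ENNReal.ofReal_mul (Nat.cast_nonneg _),
      ← ENNReal.ofReal_mul (by positivity)] at hUvol
    have hreal := (ENNReal.ofReal_le_ofReal_iff (by positivity)).1 hUvol
    have hjε : (0:ℝ) ≤ (j:ℝ) * ε := by positivity
    have hradle : s + ((j:ℝ) + 1) * ε + ε * d ≤ 2 * (s + j * ε) := by
      have h1 : ε * (1 + d) ≤ 2 * (ε * d) := by nlinarith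
      linarith
    have hpowle : (s + ((j:ℝ) + 1) * ε + ε * d) ^ d ≤ 2 ^ d * (s + j * ε) ^ d := by
      calc (s + ((j:ℝ) + 1) * ε + ε * d) ^ d ≤ (2 * (s + j * ε)) ^ d :=
            pow_le_pow_left₀ (by positivity) hradle d
        _ = 2 ^ d * (s + j * ε) ^ d := mul_pow _ _ _
    calc ((T.card : ℝ)) * ε ^ d ≤ (s + ((j:ℝ) + 1) * ε + ε * d) ^ d * ωd := hreal
      _ = ωd * (s + ((j:ℝ) + 1) * ε + ε * d) ^ d := mul_comm _ _
      _ ≤ ωd * (2 ^ d * (s + j * ε) ^ d) := mul_le_mul_of_nonneg_left hpowle hωdpos.le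
  -- summation over all cubes
  have hsum : ∑ v ∈ It, P (Ev v) ≤ ENNReal.ofReal (C₂ * Real.exp (-(t * c₁ * s ^ d))) := by
    have hstep1 : ∀ v ∈ It, P (Ev v)
        ≤ ENNReal.ofReal (t * ε ^ d * (2 ^ k * Real.exp (-(t * b * (s + jf v * ε) ^ d)))) := by
      intro v hv
      refine le_trans (hEvbound v hv) (ENNReal.ofReal_le_ofReal ?_)
      have hmono : (s + jf v * ε) ^ d ≤ m v ^ d :=
        pow_le_pow_left₀ (by positivity) (hjle v) d
      have hexp : Real.exp (-(t * b * m v ^ d)) ≤ Real.exp (-(t * b * (s + jf v * ε) ^ d)) := by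
        apply Real.exp_le_exp.2
        have := mul_le_mul_of_nonneg_left hmono (by positivity : (0:ℝ) ≤ t * b)
        linarith
      apply mul_le_mul_of_nonneg_left _ (by positivity)
      exact mul_le_mul_of_nonneg_left hexp (by positivity)
    calc ∑ v ∈ It, P (Ev v)
        ≤ ∑ v ∈ It, ENNReal.ofReal
            (t * ε ^ d * (2 ^ k * Real.exp (-(t * b * (s + jf v * ε) ^ d)))) :=
          Finset.sum_le_sum hstep1
      _ = ∑ j ∈ It.image jf, ∑ v ∈ It.filter (fun v => jf v = j),
            ENNReal.ofReal (t * ε ^ d * (2 ^ k * Real.exp (-(t * b * (s + jf v * ε) ^ d)))) :=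
          (Finset.sum_fiberwise_of_maps_to (fun v hv => Finset.mem_image_of_mem jf hv) _).symm
      _ ≤ ∑ j ∈ It.image jf, ENNReal.ofReal
            ((C₂ / 2) * Real.exp (-(t * c₁ * s ^ d)) * Real.exp (-(j:ℝ))) := by
          apply Finset.sum_le_sum
          intro j hj
          have hconst : ∀ v ∈ It.filter (fun v => jf v = j),
              ENNReal.ofReal (t * ε ^ d * (2 ^ k * Real.exp (-(t * b * (s + jf v * ε) ^ d))))
              = ENNReal.ofReal (t * ε ^ d * (2 ^ k * Real.exp (-(t * b * (s + j * ε) ^ d)))) := by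
            intro v hv
            rw [(Finset.mem_filter.1 hv).2]
          rw [Finset.sum_congr rfl hconst, Finset.sum_const, nsmul_eq_mul,
            ← ENNReal.ofReal_natCast, ← ENNReal.ofReal_mul (Nat.cast_nonneg _)]
          apply ENNReal.ofReal_le_ofReal
          set r : ℝ := s + j * ε with hrdef
          have hr0 : 0 < r := by positivity
          have hcard' := hcard j
          have hdecay := mul_exp_decay hb0 (show (0:ℝ) ≤ t * r ^ d by positivity)
          -- exponent comparison
          have hrpow : s ^ d + ((j:ℝ) * ε) * s ^ (d - 1) ≤ r ^ d := by
            have hpl := pow_lower hs0.le (show (0:ℝ) ≤ (j:ℝ) * ε by positivity) (d - 1)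
            rw [show d - 1 + 1 = d from by omega] at hpl
            exact hpl
          have hγs : ε * s ^ (d - 1) = γ * s ^ d := by
            have hss : s * s ^ (d - 1) = s ^ d := by
              conv_rhs => rw [show d = (d - 1) + 1 from by omega]
              rw [pow_succ]
              ring
            calc ε * s ^ (d - 1) = γ * (s * s ^ (d - 1)) := by rw [hεdef]; ring
              _ = γ * s ^ d := by rw [hss]
          have hunit : (1:ℝ) ≤ (b / 2) * γ * (t * s ^ d) := by
            have hA' : A ≤ t * s ^ d := hreg.le
            rw [hAdef] at hA'
            rw [div_le_iff₀ (by positivity)] at hA'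
            nlinarith [hA']
          have hj1 : t * c₁ * s ^ d + (j:ℝ) ≤ (b / 2) * (t * r ^ d) := by
            have h1 : t * (s ^ d + ((j:ℝ) * ε) * s ^ (d - 1)) ≤ t * r ^ d :=
              mul_le_mul_of_nonneg_left hrpow ht0.le
            have h2 : ((j:ℝ) * ε) * s ^ (d - 1) = (j:ℝ) * (γ * s ^ d) := by
              rw [mul_assoc, hγs]
            have h3 : (j:ℝ) ≤ (j:ℝ) * ((b / 2) * γ * (t * s ^ d)) := by
              nlinarith [Nat.cast_nonneg (α := ℝ) j, hunit]
            have h4 : (b / 2) * (t * r ^ d)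
                ≥ (b / 2) * (t * s ^ d) + (b / 2) * (t * ((j:ℝ) * (γ * s ^ d))) := by
              rw [h2] at h1
              nlinarith [h1, hb0.le]
            have h5 : (b / 2) * (t * ((j:ℝ) * (γ * s ^ d)))
                = (j:ℝ) * ((b / 2) * γ * (t * s ^ d)) := by ring
            rw [hc₁def]
            nlinarith [h3, h4, h5]
          have hE2 : Real.exp (-(b / 2 * (t * r ^ d)))
              ≤ Real.exp (-(t * c₁ * s ^ d)) * Real.exp (-(j:ℝ)) := by
            rw [← Real.exp_add]
            apply Real.exp_le_exp.2
            linarith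
          calc ((It.filter (fun v => jf v = j)).card : ℝ)
                * (t * ε ^ d * (2 ^ k * Real.exp (-(t * b * r ^ d))))
              = (((It.filter (fun v => jf v = j)).card : ℝ) * ε ^ d)
                * (2 ^ k * (t * Real.exp (-(t * b * r ^ d)))) := by ring
            _ ≤ (ωd * (2 ^ d * r ^ d)) * (2 ^ k * (t * Real.exp (-(t * b * r ^ d)))) :=
                mul_le_mul_of_nonneg_right hcard' (by positivity)
            _ = (ωd * 2 ^ d * 2 ^ k) * ((t * r ^ d) * Real.exp (-(b * (t * r ^ d)))) := by
                rw [show -(t * b * r ^ d) = -(b * (t * r ^ d)) from by ring]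
                ring
            _ ≤ (ωd * 2 ^ d * 2 ^ k) * ((2 / b) * Real.exp (-(b / 2 * (t * r ^ d)))) :=
                mul_le_mul_of_nonneg_left hdecay (by positivity)
            _ = (C₂ / 2) * Real.exp (-(b / 2 * (t * r ^ d))) := by
                rw [hC₂def, pow_add, pow_add]
                field_simp
            _ ≤ (C₂ / 2) * (Real.exp (-(t * c₁ * s ^ d)) * Real.exp (-(j:ℝ))) :=
                mul_le_mul_of_nonneg_left hE2 (by positivity)
            _ = (C₂ / 2) * Real.exp (-(t * c₁ * s ^ d)) * Real.exp (-(j:ℝ)) := by ring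
      _ ≤ ENNReal.ofReal (C₂ * Real.exp (-(t * c₁ * s ^ d))) := by
          rw [← ENNReal.ofReal_sum_of_nonneg (fun j _ => by positivity)]
          apply ENNReal.ofReal_le_ofReal
          have hgeo2 : ∑ j ∈ It.image jf, Real.exp (-(j:ℝ)) ≤ 2 := by
            have heq : ∀ j : ℕ, Real.exp (-(j:ℝ)) = (Real.exp (-1)) ^ j := by
              intro j
              rw [← Real.exp_nat_mul]
              congr 1
              ring
            have hlt1 : Real.exp (-1) < 1 := by
              rw [Real.exp_lt_one_iff]
              norm_num
            have hsum2 : ∑ j ∈ It.image jf, Real.exp (-(j:ℝ))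
                ≤ ∑' j : ℕ, (Real.exp (-1)) ^ j := by
              rw [Finset.sum_congr rfl (fun j _ => heq j)]
              exact Summable.sum_le_tsum _ (fun j _ => by positivity)
                (summable_geometric_of_lt_one (by positivity) hlt1)
            have htsum : ∑' j : ℕ, (Real.exp (-1)) ^ j = (1 - Real.exp (-1))⁻¹ :=
              tsum_geometric_of_lt_one (by positivity) hlt1
            have hehalf : Real.exp (-1) ≤ 1 / 2 := by
              rw [Real.exp_neg]
              have h2e : (2:ℝ) ≤ Real.exp 1 := by
                nlinarith [Real.add_one_le_exp 1]
              have hEi : Real.exp 1 * (Real.exp 1)⁻¹ = 1 :=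
                mul_inv_cancel₀ (Real.exp_pos 1).ne'
              nlinarith [hEi, h2e, inv_pos.2 (Real.exp_pos 1)]
            have hinv : (1 - Real.exp (-1))⁻¹ ≤ 2 := by
              have hpos : (0:ℝ) < 1 - Real.exp (-1) := by linarith
              have hEi : (1 - Real.exp (-1)) * (1 - Real.exp (-1))⁻¹ = 1 :=
                mul_inv_cancel₀ hpos.ne'
              nlinarith [hEi, inv_pos.2 hpos]
            calc ∑ j ∈ It.image jf, Real.exp (-(j:ℝ))
                ≤ ∑' j : ℕ, (Real.exp (-1)) ^ j := hsum2
              _ = (1 - Real.exp (-1))⁻¹ := htsum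
              _ ≤ 2 := hinv
          rw [← Finset.mul_sum]
          have hnn : (0:ℝ) ≤ (C₂ / 2) * Real.exp (-(t * c₁ * s ^ d)) := by positivity
          nlinarith [hgeo2, hnn, Real.exp_pos (-(t * c₁ * s ^ d)), hC₂0]
  -- final combination
  refine le_trans (measure_mono hincl) ?_
  calc P (({ω | η ω Hᶜ ≠ 0} ∪ E₀) ∪ ⋃ v ∈ It, Ev v)
      ≤ P ({ω | η ω Hᶜ ≠ 0} ∪ E₀) + P (⋃ v ∈ It, Ev v) := measure_union_le _ _
    _ ≤ (P {ω | η ω Hᶜ ≠ 0} + P E₀) + ∑ v ∈ It, P (Ev v) :=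
        add_le_add (measure_union_le _ _) (measure_biUnion_finset_le _ _)
    _ ≤ (0 + ENNReal.ofReal (2 ^ k * Real.exp (-(t * b * s ^ d))))
          + ENNReal.ofReal (C₂ * Real.exp (-(t * c₁ * s ^ d))) :=
        add_le_add (add_le_add (le_of_eq hPN) hE₀bound) hsum
    _ ≤ ENNReal.ofReal ((2 ^ k + C₂) * Real.exp (-(t * c₁ * s ^ d))) := by
        rw [zero_add, ← ENNReal.ofReal_add (by positivity) (by positivity)]
        apply ENNReal.ofReal_le_ofReal
        have h1 : Real.exp (-(t * b * s ^ d)) ≤ Real.exp (-(t * c₁ * s ^ d)) := by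
          apply Real.exp_le_exp.2
          have hsd : (0:ℝ) ≤ s ^ d := by positivity
          have hcb : c₁ ≤ b := by rw [hc₁def]; linarith
          nlinarith [ht0.le, mul_le_mul_of_nonneg_right (mul_le_mul_of_nonneg_left hcb ht0.le) hsd]
        nlinarith [Real.exp_pos (-(t * c₁ * s ^ d)),
          pow_pos (show (0:ℝ) < 2 from by norm_num) k, h1, hC₂0]

/-- Exponential tail of the longest edge `M₁(x,η_t)` created by adding the point `x` to the
Poisson process `η_t` of intensity `t` on a compact convex window `H`, assuming the two-point
edge probability bound `P(edge between x,y) ≤ C̃ exp(−t c̃ ‖x−y‖^d)`: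
`P(M₁(x,η_t) ≥ s) ≤ C̃₁ exp(−t c̃₁ s^d)` for all `s ≥ 0`, `x ∈ H`, `t ≥ 1`. -/
theorem knn_longest_new_edge_tail {d k : ℕ} {Ω : Type*} [MeasurableSpace Ω]
    (P : Measure Ω) [IsProbabilityMeasure P]
    (H : Set (EuclideanSpace ℝ (Fin d)))
    (hcomp : IsCompact H) (hconv : Convex ℝ H) (hint : (interior H).Nonempty)
    (η : ℝ → Ω → Measure (EuclideanSpace ℝ (Fin d)))
    (hη : ∀ t : ℝ, 1 ≤ t →
      IsPoissonProcess P (η t) (ENNReal.ofReal t • volume.restrict H))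
    (Ct ct : ℝ) (hCt : 0 < Ct) (hct : 0 < ct)
    (hedge : ∀ x ∈ H, ∀ y ∈ H, ∀ t : ℝ, 1 ≤ t →
      P {ω | KNNEdge k x y (η t ω)}
        ≤ ENNReal.ofReal (Ct * Real.exp (-(t * ct * dist x y ^ d)))) :
    ∃ C₁ : ℝ, 0 < C₁ ∧ ∃ c₁ : ℝ, 0 < c₁ ∧
      ∀ s : ℝ, 0 ≤ s → ∀ x ∈ H, ∀ t : ℝ, 1 ≤ t →
        P {ω | ∃ y, η t ω {y} ≠ 0 ∧ s ≤ dist x y ∧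
              (IsKNearest k x y (η t ω + Measure.dirac x)
                ∨ IsKNearest k y x (η t ω + Measure.dirac x))}
          ≤ ENNReal.ofReal (C₁ * Real.exp (-(t * c₁ * s ^ d))) := by
  classical
  -- trivial case k = 0
  rcases Nat.eq_zero_or_pos k with hk0 | hk
  · refine ⟨1, one_pos, 1, one_pos, ?_⟩
    intro s hs x hx t ht
    have hempty : {ω | ∃ y, η t ω {y} ≠ 0 ∧ s ≤ dist x y ∧
        (IsKNearest k x y (η t ω + Measure.dirac x)
          ∨ IsKNearest k y x (η t ω + Measure.dirac x))} = ∅ := by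
      ext ω
      simp only [Set.mem_setOf_eq, Set.mem_empty_iff_false, iff_false]
      rintro ⟨y, -, -, h | h⟩ <;>
        · rw [IsKNearest, hk0] at h
          simp at h
    rw [hempty, measure_empty]
    exact zero_le
  -- degenerate dimension d = 0 : hypotheses are contradictory
  rcases Nat.eq_zero_or_pos d with hd0 | hd
  · exfalso
    obtain ⟨p, hpI⟩ := hint
    have hpH : p ∈ H := interior_subset hpI
    set t : ℝ := max 1 ((Real.log Ct + 1) / ct) with htdef
    have ht1 : (1:ℝ) ≤ t := le_max_left _ _
    have h := hedge p hpH p hpH t ht1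
    have hev : {ω | KNNEdge k p p (η t ω)} = Set.univ := by
      ext ω
      simp only [Set.mem_setOf_eq, Set.mem_univ, iff_true]
      left
      rw [IsKNearest]
      have hset : {z : EuclideanSpace ℝ (Fin d) | dist p z < dist p p} = ∅ := by
        ext z; simp [dist_nonneg.not_gt]
      rw [hset]
      simp only [measure_empty]
      exact_mod_cast hk
    rw [hev, measure_univ] at h
    have h1 : (1:ℝ) ≤ Ct * Real.exp (-(t * ct * dist p p ^ d)) := ENNReal.one_le_ofReal.1 h
    rw [dist_self, hd0, pow_zero, mul_one] at h1
    have h2 : Real.exp (t * ct) ≤ Ct := by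
      have hepos := Real.exp_pos (-(t * ct))
      rw [Real.exp_neg] at h1
      calc Real.exp (t * ct) = 1 / (Real.exp (t * ct))⁻¹ := by field_simp
        _ ≤ Ct := by
            rw [div_le_iff₀ (by positivity)]
            nlinarith [Real.exp_pos (t * ct)]
    have h3 : t * ct ≤ Real.log Ct := (Real.le_log_iff_exp_le hCt).2 h2
    have h4 : (Real.log Ct + 1) / ct ≤ t := le_max_right _ _
    rw [div_le_iff₀ hct] at h4
    linarith
  -- main case : d ≥ 1, k ≥ 1
  obtain ⟨p, hpI⟩ := hint
  have hpH : p ∈ H := interior_subset hpI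
  obtain ⟨ρ, hρ0, hρball⟩ : ∃ ρ > 0, ball p ρ ⊆ H := by
    rcases Metric.isOpen_iff.1 isOpen_interior p hpI with ⟨ρ, hρ0, hsub⟩
    exact ⟨ρ, hρ0, hsub.trans interior_subset⟩
  set D := Metric.diam H with hDdef
  have hD0 : 0 ≤ D := Metric.diam_nonneg
  have hdistD : ∀ a ∈ H, ∀ b ∈ H, dist a b ≤ D := fun a ha b hb =>
    Metric.dist_le_diam_of_mem hcomp.isBounded ha hb
  have hHm : MeasurableSet H := hcomp.isClosed.measurableSet
  have hvolH : volume H ≠ ⊤ := hcomp.measure_lt_top.ne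
  set ωd : ℝ := (volume (ball (0 : EuclideanSpace ℝ (Fin d)) 1)).toReal with hωddef
  have hballfin : volume (ball (0 : EuclideanSpace ℝ (Fin d)) 1) ≠ ⊤ := measure_ball_lt_top.ne
  have hωdpos : 0 < ωd := ENNReal.toReal_pos (measure_ball_pos volume 0 one_pos).ne' hballfin
  set cg : ℝ := (ρ / (ρ + D + 1)) ^ d * ωd with hcgdef
  have hcg0 : 0 < cg := by
    have : 0 < ρ / (ρ + D + 1) := div_pos hρ0 (by linarith)
    positivity
  have hgeom : ∀ z ∈ H, ∀ r : ℝ, 0 < r → r ≤ D + 1 →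
      ENNReal.ofReal (cg * r ^ d) ≤ volume (ball z r ∩ H) := by
    intro z hz r hr hrD
    have h := convex_inter_ball_vol hconv hρ0 hρball hz hr (hdistD p hpH z hz) hD0
      (by linarith)
    calc ENNReal.ofReal (cg * r ^ d)
        = ENNReal.ofReal ((r / (ρ + D + 1)) ^ d * ρ ^ d) * ENNReal.ofReal ωd := by
          rw [← ENNReal.ofReal_mul (by positivity)]
          congr 1
          rw [hcgdef, div_pow, div_pow]
          field_simp
      _ = ENNReal.ofReal ((r / (ρ + D + 1)) ^ d * ρ ^ d)
            * volume (ball (0 : EuclideanSpace ℝ (Fin d)) 1) := by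
          rw [hωddef, ENNReal.ofReal_toReal hballfin]
      _ ≤ volume (H ∩ ball z r) := h
      _ = volume (ball z r ∩ H) := by rw [Set.inter_comm]
  set γ : ℝ := min (1 / (4 * (d : ℝ))) (min 1 (cg / 2 ^ (d + 1))) with hγdef
  have hd0R : (0:ℝ) < d := by exact_mod_cast hd
  have hγ0 : 0 < γ := by
    apply lt_min (by positivity)
    exact lt_min one_pos (by positivity)
  have hγ1 : γ ≤ 1 := le_trans (min_le_right _ _) (min_le_left _ _)
  have hγ4d : γ * d ≤ 1 / 4 := by
    have h1 : γ ≤ 1 / (4 * d) := min_le_left _ _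
    rw [le_div_iff₀ (by positivity)] at h1
    linarith [h1]
  have hγcg : γ ^ d ≤ cg / 2 ^ (d + 1) := by
    calc γ ^ d ≤ γ ^ 1 := pow_le_pow_of_le_one hγ0.le hγ1 hd
      _ = γ := pow_one γ
      _ ≤ cg / 2 ^ (d + 1) := le_trans (min_le_right _ _) (min_le_right _ _)
  set b : ℝ := cg / 2 ^ (d + 2) with hbdef
  have hb0 : 0 < b := by positivity
  set A : ℝ := 2 / (b * γ) with hAdef
  have hA0 : 0 < A := by positivity
  set c₁ : ℝ := b / 2 with hc₁def
  have hc₁0 : 0 < c₁ := by positivity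
  set C₂ : ℝ := ωd * 2 ^ (d + k + 2) / b with hC₂def
  have hC₂0 : 0 < C₂ := by positivity
  refine ⟨2 ^ k + C₂ + Real.exp (c₁ * A), by positivity, c₁, hc₁0, ?_⟩
  set C₁ : ℝ := 2 ^ k + C₂ + Real.exp (c₁ * A) with hC₁def
  intro s hs x hx t ht
  have ht0 : 0 < t := lt_of_lt_of_le one_pos ht
  have hPt := hη t ht
  set lam : Measure (EuclideanSpace ℝ (Fin d)) := ENNReal.ofReal t • volume.restrict H
    with hlamdef
  have hfin : ∀ A' : Set (EuclideanSpace ℝ (Fin d)), lam A' ≠ ⊤ := by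
    intro A'
    apply ne_top_of_le_ne_top _ (measure_mono (Set.subset_univ A'))
    rw [hlamdef, Measure.smul_apply, smul_eq_mul, Measure.restrict_apply_univ]
    exact ENNReal.mul_ne_top ENNReal.ofReal_ne_top hvolH
  have hlamval : ∀ A' : Set (EuclideanSpace ℝ (Fin d)), MeasurableSet A' →
      (lam A').toReal = t * (volume (A' ∩ H)).toReal := by
    intro A' hA'
    rw [hlamdef, Measure.smul_apply, Measure.restrict_apply hA', smul_eq_mul,
      ENNReal.toReal_mul, ENNReal.toReal_ofReal ht0.le]
  by_cases hreg : t * s ^ d ≤ A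
  · -- trivial regime
    apply le_trans prob_le_one
    rw [ENNReal.one_le_ofReal]
    have h1 : Real.exp (-(c₁ * A)) ≤ Real.exp (-(t * c₁ * s ^ d)) := by
      apply Real.exp_le_exp.2
      have : t * c₁ * s ^ d = c₁ * (t * s ^ d) := by ring
      rw [this]
      nlinarith
    calc (1:ℝ) = Real.exp (c₁ * A) * Real.exp (-(c₁ * A)) := by
          rw [← Real.exp_add]; simp
      _ ≤ C₁ * Real.exp (-(t * c₁ * s ^ d)) := by
          apply mul_le_mul _ h1 (Real.exp_pos _).le (by positivity)
          rw [hC₁def]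
          nlinarith [pow_pos (show (0:ℝ) < 2 by norm_num) k, hC₂0]
  push_neg at hreg
  have hs0 : 0 < s := by
    rcases eq_or_lt_of_le hs with heq | h
    · exfalso
      rw [← heq, zero_pow (Nat.pos_iff_ne_zero.1 hd), mul_zero] at hreg
      linarith
    · exact h
  have hPN : P {ω | η t ω Hᶜ ≠ 0} = 0 := by
    have h := poisson_ne_zero_le hPt hHm.compl (hfin _)
    rw [hlamval _ hHm.compl, Set.compl_inter_self] at h
    simpa using h
  by_cases hsD : s ≤ D
  swap
  · -- s > diam H : the event is almost surely empty
    push_neg at hsD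
    have hsub : {ω | ∃ y, η t ω {y} ≠ 0 ∧ s ≤ dist x y ∧
        (IsKNearest k x y (η t ω + Measure.dirac x)
          ∨ IsKNearest k y x (η t ω + Measure.dirac x))} ⊆ {ω | η t ω Hᶜ ≠ 0} := by
      rintro ω ⟨y, hy0, hys, -⟩
      have hyH : y ∉ H := by
        intro hyH
        exact absurd (hdistD x hx y hyH) (by linarith)
      have : η t ω {y} ≤ η t ω Hᶜ := measure_mono (Set.singleton_subset_iff.2 hyH)
      simp only [Set.mem_setOf_eq]
      intro h0
      exact hy0 (le_antisymm (h0 ▸ this) zero_le)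
    calc P _ ≤ P {ω | η t ω Hᶜ ≠ 0} := measure_mono hsub
      _ = 0 := hPN
      _ ≤ _ := zero_le
  -- MAIN regime : apply the core lemma
  have hballvol : volume (ball (0 : EuclideanSpace ℝ (Fin d)) 1) = ENNReal.ofReal ωd :=
    (ENNReal.ofReal_toReal hballfin).symm
  refine le_trans (knn_core P hd hk H hHm hvolH D hD0 hdistD ωd hωdpos hballvol
    cg γ b A c₁ C₂ hcg0 hγ0 hγ1 hγ4d hγcg hbdef hAdef hc₁def hC₂def hgeom
    (η t) t ht hPt x hx s hs0 hsD hreg) (ENNReal.ofReal_le_ofReal ?_)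
  apply mul_le_mul_of_nonneg_right _ (Real.exp_pos _).le
  rw [hC₁def]
  nlinarith [Real.exp_pos (c₁ * A)]
end
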